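/- arXiv:1312.0076 — 4 statements merged into one kernel-verified Lean document; each statement's English description precedes it below -/
import Mathlib

section
/- The function g(t) = t + 2e^{−t} + t·e^{−t} − 2 is strictly positive for all t > 0. -/
open Real

theorem stmt_2 (t : ℝ) (ht : 0 < t) :
    0 < t + 2 * Real.exp (-t) + t * Real.exp (-t) - 2 := by
  set F : ℝ → ℝ := fun x => x + 2 * Real.exp (-x) + x * Real.exp (-x) - 2 with hF
  have hderiv : ∀ x : ℝ, HasDerivAt F (1 - (1 + x) * Real.exp (-x)) x := by
    intro x
    have h1 : HasDerivAt (fun x : ℝ => Real.exp (-x)) (-Real.exp (-x)) x := by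
      simpa using (hasDerivAt_neg x).exp
    have h2 : HasDerivAt (fun x : ℝ => x * Real.exp (-x))
        (1 * Real.exp (-x) + x * (-Real.exp (-x))) x :=
      (hasDerivAt_id x).mul h1
    have h3 : HasDerivAt (fun x : ℝ => x + 2 * Real.exp (-x) + x * Real.exp (-x) - 2)
        (1 + 2 * -Real.exp (-x) + (1 * Real.exp (-x) + x * -Real.exp (-x))) x :=
      (((hasDerivAt_id' x).add (h1.const_mul 2)).add h2).sub_const 2
    convert h3 using 1
    ring
  have hmono : StrictMonoOn F (Set.Ici (0:ℝ)) := by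
    apply strictMonoOn_of_deriv_pos (convex_Ici 0)
    · apply Continuous.continuousOn; fun_prop
    · intro x hx
      rw [interior_Ici] at hx
      rw [(hderiv x).deriv]
      have h := Real.add_one_lt_exp (ne_of_gt hx)
      have hexp : Real.exp (-x) = (Real.exp x)⁻¹ := by rw [Real.exp_neg]
      have hpos : 0 < Real.exp x := Real.exp_pos x
      rw [hexp, sub_pos]
      rw [mul_inv_lt_iff₀' hpos]
      linarith
  have h0 : F 0 = 0 := by simp [hF]
  have := hmono (Set.self_mem_Ici) (Set.mem_Ici.mpr ht.le) ht
  rw [h0] at this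
  exact this
end

section
/- Let λ, m, β > 0, λ ≤ m/(βe), c ∈ [κ₁, κ₂] as above, and u₀, v continuous with 0 ≤ v_s(x) ≤ c for all s, x and 0 ≤ u₀(x) ≤ c. Then the function (Φv)_t(x) = exp(−m∫₀^t e^{−(v_s*φ)(x)} ds)·u₀(x) + λ∫₀^t exp(−m∫_τ^t e^{−(v_s*φ)(x)} ds) dτ satisfies 0 ≤ (Φv)_t(x) ≤ c for all t ≥ 0, x ∈ ℝ^d. -/
open Real Set MeasureTheory intervalIntegral

lemma keyalg (β : ℝ) (lam m κ₁ κ₂ c : ℝ) (hlam : 0 < lam) (hm : 0 < m)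
    (h₁ : lam = m * κ₁ * Real.exp (-(β * κ₁)))
    (h₂ : lam = m * κ₂ * Real.exp (-(β * κ₂)))
    (hκ₁ : 0 < κ₁) (hc : c ∈ Set.Icc κ₁ κ₂) :
    lam ≤ m * c * Real.exp (-(β * c)) := by
  obtain ⟨hc1, hc2⟩ := hc
  rcases eq_or_lt_of_le (hc1.trans hc2 : κ₁ ≤ κ₂) with heq | hlt
  · have : c = κ₁ := le_antisymm (heq ▸ hc2) hc1
    rw [this, ← h₁]
  · set θ : ℝ := (c - κ₁) / (κ₂ - κ₁) with hθ
    have hθ0 : 0 ≤ θ := div_nonneg (by linarith) (by linarith)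
    have hθ1 : 0 ≤ 1 - θ := by
      have : θ ≤ 1 := (div_le_one (by linarith)).2 (by linarith)
      linarith
    have hcrep : c = (1 - θ) * κ₁ + θ * κ₂ := by
      have hne : κ₂ - κ₁ ≠ 0 := by linarith
      field_simp [hθ]
      have h3 : θ * (κ₂ - κ₁) = c - κ₁ := by rw [hθ]; exact div_mul_cancel₀ _ hne
      linear_combination -h3
    have hlm : lam / m = (κ₁ * Real.exp (-(β * κ₁))) ^ (1 - θ) *
        (κ₂ * Real.exp (-(β * κ₂))) ^ θ := by
      have e1 : κ₁ * Real.exp (-(β * κ₁)) = lam / m := by rw [h₁]; field_simp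
      have e2 : κ₂ * Real.exp (-(β * κ₂)) = lam / m := by rw [h₂]; field_simp
      rw [e1, e2, ← Real.rpow_add (div_pos hlam hm)]
      norm_num
    have hexp : Real.exp (-(β * κ₁)) ^ (1 - θ) * Real.exp (-(β * κ₂)) ^ θ
        = Real.exp (-(β * c)) := by
      rw [← Real.exp_mul, ← Real.exp_mul, ← Real.exp_add, hcrep]
      ring_nf
    have hgm : κ₁ ^ (1 - θ) * κ₂ ^ θ ≤ c := by
      rw [hcrep]
      exact Real.geom_mean_le_arith_mean2_weighted hθ1 hθ0 hκ₁.le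
        (hκ₁.trans_le (hc1.trans hc2)).le (by ring)
    have : lam / m ≤ c * Real.exp (-(β * c)) := by
      rw [hlm, Real.mul_rpow hκ₁.le (Real.exp_pos _).le,
        Real.mul_rpow (hκ₁.trans hlt).le (Real.exp_pos _).le]
      calc κ₁ ^ (1-θ) * Real.exp (-(β*κ₁)) ^ (1-θ) * (κ₂ ^ θ * Real.exp (-(β*κ₂)) ^ θ)
          = (κ₁ ^ (1-θ) * κ₂ ^ θ) * (Real.exp (-(β*κ₁)) ^ (1-θ) * Real.exp (-(β*κ₂)) ^ θ) := by ring
        _ ≤ c * Real.exp (-(β * c)) := by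
            rw [hexp]
            exact mul_le_mul_of_nonneg_right hgm (Real.exp_pos _).le
    calc lam = m * (lam / m) := by field_simp
      _ ≤ m * (c * Real.exp (-(β * c))) := by
          exact mul_le_mul_of_nonneg_left this hm.le
      _ = m * c * Real.exp (-(β * c)) := by ring

theorem stmt_14 (d : ℕ) (φ : (Fin d → ℝ) → ℝ)
    (hφ_int : Integrable φ) (hφ_pos : ∀ x, 0 ≤ φ x)
    (β : ℝ) (hβ : β = ∫ x, φ x)
    (lam m κ₁ κ₂ c : ℝ) (hlam : 0 < lam) (hm : 0 < m) (hβpos : 0 < β)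
    (hsmall : lam ≤ m / (β * Real.exp 1))
    (h₁ : lam = m * κ₁ * Real.exp (-(β * κ₁)))
    (h₂ : lam = m * κ₂ * Real.exp (-(β * κ₂)))
    (hκ₁ : 0 < κ₁) (hκ : κ₁ ≤ κ₂) (hc : c ∈ Set.Icc κ₁ κ₂)
    (u₀ : (Fin d → ℝ) → ℝ) (hu₀ : ∀ x, 0 ≤ u₀ x ∧ u₀ x ≤ c)
    (v : ℝ → (Fin d → ℝ) → ℝ) (hv_cont : Continuous ↿v)
    (hv : ∀ s x, 0 ≤ v s x ∧ v s x ≤ c) :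
    ∀ t : ℝ, 0 ≤ t → ∀ x,
      0 ≤ Real.exp (-(m * ∫ s in (0:ℝ)..t, Real.exp (-(∫ y, φ (x - y) * v s y)))) * u₀ x
            + lam * ∫ τ in (0:ℝ)..t,
                Real.exp (-(m * ∫ s in τ..t, Real.exp (-(∫ y, φ (x - y) * v s y)))) ∧
      Real.exp (-(m * ∫ s in (0:ℝ)..t, Real.exp (-(∫ y, φ (x - y) * v s y)))) * u₀ x
            + lam * ∫ τ in (0:ℝ)..t,
                Real.exp (-(m * ∫ s in τ..t, Real.exp (-(∫ y, φ (x - y) * v s y)))) ≤ c := by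
  intro t ht x
  have hkey : lam ≤ m * c * Real.exp (-(β * c)) := keyalg β lam m κ₁ κ₂ c hlam hm h₁ h₂ hκ₁ hc
  have hc0 : 0 < c := hκ₁.trans_le hc.1
  have hmp : MeasurePreserving (fun y => x - y) (volume : Measure (Fin d → ℝ)) volume :=
    Measure.measurePreserving_sub_left volume x
  have hφx : Integrable (fun y : Fin d → ℝ => φ (x - y)) :=
    (hmp.integrable_comp hφ_int.aestronglyMeasurable).2 hφ_int
  have hβx : ∫ y, φ (x - y) = β := by
    rw [hβ]
    exact hmp.integral_comp (MeasurableEquiv.subLeft x).measurableEmbedding φ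
  have hvs_cont : ∀ s : ℝ, Continuous fun y => v s y := fun s =>
    hv_cont.comp (Continuous.prodMk_right s)
  have hms : ∀ s : ℝ, AEStronglyMeasurable (fun y => φ (x - y) * v s y) volume := fun s =>
    hφx.aestronglyMeasurable.mul (hvs_cont s).aestronglyMeasurable
  have hpt : ∀ s y, φ (x - y) * v s y ≤ c * φ (x - y) := by
    intro s y
    calc φ (x - y) * v s y ≤ φ (x - y) * c :=
          mul_le_mul_of_nonneg_left (hv s y).2 (hφ_pos _)
      _ = c * φ (x - y) := mul_comm _ _
  have hbound : ∀ s y, ‖φ (x - y) * v s y‖ ≤ c * φ (x - y) := by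
    intro s y
    rw [Real.norm_of_nonneg (mul_nonneg (hφ_pos _) (hv s y).1)]
    exact hpt s y
  have hint : ∀ s : ℝ, Integrable (fun y => φ (x - y) * v s y) := fun s =>
    (hφx.const_mul c).mono' (hms s) (Filter.Eventually.of_forall (hbound s))
  set I : ℝ → ℝ := fun s => ∫ y, φ (x - y) * v s y with hIdef
  have hIβc : ∀ s, I s ≤ β * c := by
    intro s
    calc I s ≤ ∫ y, c * φ (x - y) :=
          integral_mono (hint s) (hφx.const_mul c) (fun y => hpt s y)
      _ = c * ∫ y, φ (x - y) := integral_const_mul c _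
      _ = β * c := by rw [hβx]; ring
  have hIcont : Continuous I := by
    apply continuous_of_dominated hms (fun s => Filter.Eventually.of_forall (hbound s))
      (hφx.const_mul c)
    refine Filter.Eventually.of_forall fun y => ?_
    exact continuous_const.mul (hv_cont.comp (continuous_id.prodMk continuous_const))
  set g : ℝ → ℝ := fun s => Real.exp (-(I s)) with hgdef
  have hgcont : Continuous g := Real.continuous_exp.comp hIcont.neg
  have hglb : ∀ s, Real.exp (-(β * c)) ≤ g s := fun s =>
    Real.exp_le_exp.2 (neg_le_neg (hIβc s))
  set M : ℝ → ℝ := fun τ => ∫ s in τ..t, g s with hMdef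
  have hMcont : Continuous M := by
    have h1 : Continuous fun τ => ∫ s in (0:ℝ)..τ, g s :=
      intervalIntegral.continuous_primitive (fun a b => hgcont.intervalIntegrable a b) 0
    have h2 : M = fun τ => (∫ s in (0:ℝ)..t, g s) - ∫ s in (0:ℝ)..τ, g s := by
      funext τ
      exact (intervalIntegral.integral_interval_sub_left (hgcont.intervalIntegrable 0 t)
        (hgcont.intervalIntegrable 0 τ)).symm
    rw [h2]
    exact continuous_const.sub h1
  set a : ℝ := m * Real.exp (-(β * c)) with hadef
  have ha : 0 < a := mul_pos hm (Real.exp_pos _)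
  have hac : lam ≤ a * c := by rw [hadef]; calc lam ≤ m * c * Real.exp (-(β*c)) := hkey
                                                _ = m * Real.exp (-(β*c)) * c := by ring
  have key1 : ∀ τ ∈ Icc (0:ℝ) t, Real.exp (-(m * M τ)) ≤ Real.exp (-(a * (t - τ))) := by
    intro τ hτ
    apply Real.exp_le_exp.2
    apply neg_le_neg
    have hMlb : Real.exp (-(β * c)) * (t - τ) ≤ M τ := by
      have h2 := intervalIntegral.integral_mono_on hτ.2
        (_root_.intervalIntegrable_const (μ := volume) (c := Real.exp (-(β * c))))
        (hgcont.intervalIntegrable τ t) (fun s _ => hglb s)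
      rwa [intervalIntegral.integral_const, smul_eq_mul, mul_comm] at h2
    calc a * (t - τ) = m * (Real.exp (-(β * c)) * (t - τ)) := by rw [hadef]; ring
      _ ≤ m * M τ := mul_le_mul_of_nonneg_left hMlb hm.le
  have hLHScont : Continuous fun τ => Real.exp (-(m * M τ)) :=
    Real.continuous_exp.comp (continuous_const.mul hMcont).neg
  have hRHScont : Continuous fun τ : ℝ => Real.exp (-(a * (t - τ))) := by
    apply Real.continuous_exp.comp
    exact (continuous_const.mul (continuous_const.sub continuous_id)).neg
  have hexpat : Real.exp (-(a * t)) ≤ 1 := by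
    rw [Real.exp_le_one_iff]
    exact neg_nonpos.2 (mul_nonneg ha.le ht)
  have hRHSval : ∫ τ in (0:ℝ)..t, Real.exp (-(a * (t - τ))) = (1 - Real.exp (-(a * t))) / a := by
    have hcong : ∀ τ ∈ Set.uIcc (0:ℝ) t,
        Real.exp (-(a * (t - τ))) = Real.exp (-(a * t)) * Real.exp (a * τ) := by
      intro τ _
      rw [← Real.exp_add]
      ring_nf
    rw [intervalIntegral.integral_congr hcong, intervalIntegral.integral_const_mul,
      intervalIntegral.integral_comp_mul_left (fun u => Real.exp u) ha.ne',
      _root_.integral_exp]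
    have h1 : Real.exp (-(a * t)) * Real.exp (a * t) = 1 := by
      rw [← Real.exp_add]; simp
    rw [mul_zero, Real.exp_zero, smul_eq_mul]
    field_simp
    nlinarith [h1]
  have hintbound : lam * ∫ τ in (0:ℝ)..t, Real.exp (-(m * M τ)) ≤ c * (1 - Real.exp (-(a * t))) := by
    have hmono : (∫ τ in (0:ℝ)..t, Real.exp (-(m * M τ))) ≤
        ∫ τ in (0:ℝ)..t, Real.exp (-(a * (t - τ))) :=
      intervalIntegral.integral_mono_on ht (hLHScont.intervalIntegrable 0 t)
        (hRHScont.intervalIntegrable 0 t) key1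
    have hla : lam / a ≤ c := (div_le_iff₀ ha).2 (by linarith [hac])
    calc lam * ∫ τ in (0:ℝ)..t, Real.exp (-(m * M τ))
        ≤ lam * ((1 - Real.exp (-(a * t))) / a) :=
          mul_le_mul_of_nonneg_left (hmono.trans_eq hRHSval) hlam.le
      _ = (lam / a) * (1 - Real.exp (-(a * t))) := by ring
      _ ≤ c * (1 - Real.exp (-(a * t))) :=
          mul_le_mul_of_nonneg_right hla (by linarith)
  have hfirst : Real.exp (-(m * M 0)) * u₀ x ≤ Real.exp (-(a * t)) * c := by
    have h0 := key1 0 ⟨le_refl 0, ht⟩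
    rw [sub_zero] at h0
    exact mul_le_mul h0 (hu₀ x).2 (hu₀ x).1 (Real.exp_pos _).le
  constructor
  · apply add_nonneg
    · exact mul_nonneg (Real.exp_pos _).le (hu₀ x).1
    · exact mul_nonneg hlam.le
        (intervalIntegral.integral_nonneg ht (fun τ _ => (Real.exp_pos _).le))
  · calc Real.exp (-(m * M 0)) * u₀ x + lam * ∫ τ in (0:ℝ)..t, Real.exp (-(m * M τ))
        ≤ Real.exp (-(a * t)) * c + c * (1 - Real.exp (-(a * t))) :=
          add_le_add hfirst hintbound
      _ = c := by ring
end

section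
/- Let λ, m, β, c, T > 0 with λβm·T²/2 + cβm·T < 1. Then the map Φ defined by (Φv)_t(x) = exp(−m∫₀^t e^{−(v_s*φ)(x)} ds)·u₀(x) + λ∫₀^t exp(−m∫_τ^t e^{−(v_s*φ)(x)} ds) dτ is a contraction on the set of continuous functions v: [0,T] → C_b(ℝ^d) with 0 ≤ v ≤ c, with Lipschitz constant λβmT²/2 + cβmT, where u₀ is fixed with 0 ≤ u₀ ≤ c. -/
open Real Set MeasureTheory intervalIntegral

lemma exp_neg_lip (a b : ℝ) (ha : 0 ≤ a) (hb : 0 ≤ b) : |Real.exp (-a) - Real.exp (-b)| ≤ |a - b| := by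
  wlog h : b ≤ a generalizing a b
  · rw [abs_sub_comm, abs_sub_comm a]; exact this b a hb ha (le_of_not_ge h)
  have h1 : Real.exp (-a) ≤ Real.exp (-b) := Real.exp_le_exp.2 (by linarith)
  have hea : Real.exp (-a) = Real.exp (-(a-b)) * Real.exp (-b) := by
    rw [← Real.exp_add]; ring_nf
  have h3 := Real.add_one_le_exp (-(a-b))
  have h4 : Real.exp (-b) ≤ 1 := Real.exp_le_one_iff.2 (by linarith)
  have h5 := Real.exp_pos (-b)
  rw [abs_of_nonpos (by linarith), abs_of_nonneg (by linarith)]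
  nlinarith

lemma conv_int (d : ℕ) (φ : (Fin d → ℝ) → ℝ) (hφ_int : Integrable φ)
    (c : ℝ) (u : ℝ → (Fin d → ℝ) → ℝ) (hu_cont : Continuous ↿u)
    (hu : ∀ s x, 0 ≤ u s x ∧ u s x ≤ c) (x : Fin d → ℝ) (s : ℝ) :
    Integrable (fun y => φ (x - y) * u s y) := by
  have h := hφ_int.comp_sub_left (μ := volume) x
  have hmeas : AEStronglyMeasurable (fun y => u s y) volume :=
    (hu_cont.comp (continuous_const.prodMk continuous_id)).aestronglyMeasurable
  have hb : ∃ C, ∀ y, ‖u s y‖ ≤ C := by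
    refine ⟨|c|, fun y => ?_⟩
    rw [Real.norm_eq_abs, abs_of_nonneg (hu s y).1]
    exact (hu s y).2.trans (le_abs_self c)
  have := h.bdd_mul hmeas (c := hb.choose) (Filter.Eventually.of_forall hb.choose_spec)
  simpa [mul_comm] using this

lemma conv_cont (d : ℕ) (φ : (Fin d → ℝ) → ℝ) (hφ_int : Integrable φ)
    (hφ_pos : ∀ x, 0 ≤ φ x)
    (c : ℝ) (u : ℝ → (Fin d → ℝ) → ℝ) (hu_cont : Continuous ↿u)
    (hu : ∀ s x, 0 ≤ u s x ∧ u s x ≤ c) (x : Fin d → ℝ) :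
    Continuous fun s => ∫ y, φ (x - y) * u s y := by
  apply continuous_of_dominated (bound := fun y => c * φ (x - y))
  · exact fun s => (conv_int d φ hφ_int c u hu_cont hu x s).aestronglyMeasurable
  · intro s
    filter_upwards with y
    rw [Real.norm_eq_abs, abs_of_nonneg (mul_nonneg (hφ_pos _) (hu s y).1)]
    calc φ (x - y) * u s y ≤ φ (x - y) * c :=
          mul_le_mul_of_nonneg_left (hu s y).2 (hφ_pos _)
      _ = c * φ (x - y) := by ring
  · exact ((hφ_int.comp_sub_left (μ := volume) x)).const_mul c
  · filter_upwards with y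
    exact continuous_const.mul (hu_cont.comp (continuous_id.prodMk continuous_const))

theorem stmt_15 (d : ℕ) (φ : (Fin d → ℝ) → ℝ)
    (hφ_int : Integrable φ) (hφ_pos : ∀ x, 0 ≤ φ x)
    (β : ℝ) (hβ : β = ∫ x, φ x)
    (lam m c T : ℝ) (hlam : 0 < lam) (hm : 0 < m) (hc : 0 < c) (hT : 0 < T)
    (hK : lam * β * m * T ^ 2 / 2 + c * β * m * T < 1)
    (u₀ : (Fin d → ℝ) → ℝ) (hu₀ : ∀ x, 0 ≤ u₀ x ∧ u₀ x ≤ c)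
    (v w : ℝ → (Fin d → ℝ) → ℝ)
    (hv_cont : Continuous ↿v) (hw_cont : Continuous ↿w)
    (hv : ∀ s x, 0 ≤ v s x ∧ v s x ≤ c) (hw : ∀ s x, 0 ≤ w s x ∧ w s x ≤ c)
    (M : ℝ) (hM : ∀ s ∈ Set.Icc (0:ℝ) T, ∀ x, |v s x - w s x| ≤ M) :
    ∀ t ∈ Set.Icc (0:ℝ) T, ∀ x,
      |(Real.exp (-(m * ∫ s in (0:ℝ)..t, Real.exp (-(∫ y, φ (x - y) * v s y)))) * u₀ x
          + lam * ∫ τ in (0:ℝ)..t,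
              Real.exp (-(m * ∫ s in τ..t, Real.exp (-(∫ y, φ (x - y) * v s y)))))
        - (Real.exp (-(m * ∫ s in (0:ℝ)..t, Real.exp (-(∫ y, φ (x - y) * w s y)))) * u₀ x
          + lam * ∫ τ in (0:ℝ)..t,
              Real.exp (-(m * ∫ s in τ..t, Real.exp (-(∫ y, φ (x - y) * w s y)))))|
      ≤ (lam * β * m * T ^ 2 / 2 + c * β * m * T) * M := by
  intro t ht x
  obtain ⟨ht0, htT⟩ := ht
  have hM0 : 0 ≤ M := (abs_nonneg _).trans (hM 0 ⟨le_refl 0, hT.le⟩ 0)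
  have hβ0 : 0 ≤ β := hβ ▸ integral_nonneg hφ_pos
  set A : ℝ → ℝ := fun s => ∫ y, φ (x - y) * v s y with hA_def
  set B : ℝ → ℝ := fun s => ∫ y, φ (x - y) * w s y with hB_def
  have hA_cont : Continuous A := conv_cont d φ hφ_int hφ_pos c v hv_cont hv x
  have hB_cont : Continuous B := conv_cont d φ hφ_int hφ_pos c w hw_cont hw x
  have hA0 : ∀ s, 0 ≤ A s := fun s =>
    integral_nonneg fun y => mul_nonneg (hφ_pos _) (hv s y).1
  have hB0 : ∀ s, 0 ≤ B s := fun s =>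
    integral_nonneg fun y => mul_nonneg (hφ_pos _) (hw s y).1
  -- difference of convolutions
  have hAB : ∀ s ∈ Set.Icc (0:ℝ) T, |A s - B s| ≤ β * M := by
    intro s hs
    have hiv := conv_int d φ hφ_int c v hv_cont hv x s
    have hiw := conv_int d φ hφ_int c w hw_cont hw x s
    have hsub : A s - B s = ∫ y, (φ (x - y) * v s y - φ (x - y) * w s y) :=
      (integral_sub hiv hiw).symm
    rw [hsub]
    have hbd : ∀ y, |φ (x - y) * v s y - φ (x - y) * w s y| ≤ φ (x - y) * M := by
      intro y
      have : φ (x - y) * v s y - φ (x - y) * w s y = φ (x - y) * (v s y - w s y) := by ring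
      rw [this, abs_mul, abs_of_nonneg (hφ_pos _)]
      exact mul_le_mul_of_nonneg_left (hM s hs y) (hφ_pos _)
    calc |∫ y, (φ (x - y) * v s y - φ (x - y) * w s y)|
        ≤ ∫ y, |φ (x - y) * v s y - φ (x - y) * w s y| := by
          simpa [Real.norm_eq_abs] using
            norm_integral_le_integral_norm (fun y => φ (x - y) * v s y - φ (x - y) * w s y)
      _ ≤ ∫ y, φ (x - y) * M := by
          apply integral_mono_of_nonneg
          · filter_upwards with y; exact abs_nonneg _
          · exact (hφ_int.comp_sub_left (μ := volume) x).mul_const M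
          · filter_upwards with y; exact hbd y
      _ = β * M := by
          rw [MeasureTheory.integral_mul_const, integral_sub_left_eq_self φ volume x, hβ]
  set fv : ℝ → ℝ := fun s => Real.exp (-A s) with hfv_def
  set fw : ℝ → ℝ := fun s => Real.exp (-B s) with hfw_def
  have hfv_cont : Continuous fv := (hA_cont.neg).rexp
  have hfw_cont : Continuous fw := (hB_cont.neg).rexp
  have hfv_int : ∀ a b : ℝ, IntervalIntegrable fv volume a b := fun a b =>
    hfv_cont.intervalIntegrable a b
  have hfw_int : ∀ a b : ℝ, IntervalIntegrable fw volume a b := fun a b =>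
    hfw_cont.intervalIntegrable a b
  have hfvw : ∀ s ∈ Set.Icc (0:ℝ) T, |fv s - fw s| ≤ β * M := fun s hs =>
    (exp_neg_lip (A s) (B s) (hA0 s) (hB0 s)).trans (hAB s hs)
  -- inner integral nonneg
  have hIv0 : ∀ τ, τ ≤ t → 0 ≤ ∫ s in τ..t, fv s := fun τ hτ =>
    intervalIntegral.integral_nonneg hτ (fun s _ => (Real.exp_pos _).le)
  have hIw0 : ∀ τ, τ ≤ t → 0 ≤ ∫ s in τ..t, fw s := fun τ hτ =>
    intervalIntegral.integral_nonneg hτ (fun s _ => (Real.exp_pos _).le)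
  -- inner integral difference bound
  have hI : ∀ τ, 0 ≤ τ → τ ≤ t →
      |(∫ s in τ..t, fv s) - ∫ s in τ..t, fw s| ≤ (t - τ) * (β * M) := by
    intro τ hτ0 hτt
    rw [← intervalIntegral.integral_sub (hfv_int τ t) (hfw_int τ t)]
    have := intervalIntegral.norm_integral_le_of_norm_le_const
      (C := β * M) (f := fun s => fv s - fw s) (a := τ) (b := t) ?_
    · rw [Real.norm_eq_abs] at this
      calc |∫ s in τ..t, (fv s - fw s)| ≤ (β * M) * |t - τ| := this
        _ = (t - τ) * (β * M) := by rw [abs_of_nonneg (by linarith)]; ring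
    · intro s hs
      rw [Set.uIoc_of_le hτt] at hs
      exact hfvw s ⟨le_trans hτ0 hs.1.le, hs.2.trans htT⟩
  -- E functions
  set Ev : ℝ → ℝ := fun τ => Real.exp (-(m * ∫ s in τ..t, fv s)) with hEv_def
  set Ew : ℝ → ℝ := fun τ => Real.exp (-(m * ∫ s in τ..t, fw s)) with hEw_def
  have hE : ∀ τ, 0 ≤ τ → τ ≤ t → |Ev τ - Ew τ| ≤ m * ((t - τ) * (β * M)) := by
    intro τ hτ0 hτt
    have h1 := exp_neg_lip (m * ∫ s in τ..t, fv s) (m * ∫ s in τ..t, fw s)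
      (mul_nonneg hm.le (hIv0 τ hτt)) (mul_nonneg hm.le (hIw0 τ hτt))
    refine h1.trans ?_
    have : m * (∫ s in τ..t, fv s) - m * ∫ s in τ..t, fw s
        = m * ((∫ s in τ..t, fv s) - ∫ s in τ..t, fw s) := by ring
    rw [this, abs_mul, abs_of_pos hm]
    exact mul_le_mul_of_nonneg_left (hI τ hτ0 hτt) hm.le
  -- continuity of Ev, Ew
  have hIsplit_v : ∀ τ, (∫ s in τ..t, fv s) = (∫ s in (0:ℝ)..t, fv s) - ∫ s in (0:ℝ)..τ, fv s := by
    intro τ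
    rw [← intervalIntegral.integral_add_adjacent_intervals (hfv_int 0 τ) (hfv_int τ t)]
    ring
  have hIsplit_w : ∀ τ, (∫ s in τ..t, fw s) = (∫ s in (0:ℝ)..t, fw s) - ∫ s in (0:ℝ)..τ, fw s := by
    intro τ
    rw [← intervalIntegral.integral_add_adjacent_intervals (hfw_int 0 τ) (hfw_int τ t)]
    ring
  have hEv_cont : Continuous Ev := by
    have : Ev = fun τ => Real.exp (-(m * ((∫ s in (0:ℝ)..t, fv s) - ∫ s in (0:ℝ)..τ, fv s))) := by
      funext τ
      show Real.exp (-(m * ∫ s in τ..t, fv s)) = _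
      rw [hIsplit_v τ]
    rw [this]
    exact ((continuous_const.mul (continuous_const.sub (intervalIntegral.continuous_primitive hfv_int 0)))).neg.rexp
  have hEw_cont : Continuous Ew := by
    have : Ew = fun τ => Real.exp (-(m * ((∫ s in (0:ℝ)..t, fw s) - ∫ s in (0:ℝ)..τ, fw s))) := by
      funext τ
      show Real.exp (-(m * ∫ s in τ..t, fw s)) = _
      rw [hIsplit_w τ]
    rw [this]
    exact ((continuous_const.mul (continuous_const.sub (intervalIntegral.continuous_primitive hfw_int 0)))).neg.rexp
  -- outer integral difference bound
  have houter : |(∫ τ in (0:ℝ)..t, Ev τ) - ∫ τ in (0:ℝ)..t, Ew τ| ≤ m * (β * M) * t ^ 2 / 2 := by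
    rw [← intervalIntegral.integral_sub (hEv_cont.intervalIntegrable 0 t)
      (hEw_cont.intervalIntegrable 0 t)]
    have hle := intervalIntegral.norm_integral_le_of_norm_le
      (f := fun τ => Ev τ - Ew τ) (g := fun τ => m * ((t - τ) * (β * M))) (a := 0) (b := t)
      (μ := volume) ht0 ?_ ?_
    · have hval : (∫ τ in (0:ℝ)..t, m * ((t - τ) * (β * M)))
          = m * (β * M) * t ^ 2 / 2 := by
        have h1 : (∫ τ in (0:ℝ)..t, m * ((t - τ) * (β * M)))
            = (m * (β * M)) * ∫ τ in (0:ℝ)..t, (t - τ) := by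
          rw [← intervalIntegral.integral_const_mul]
          congr 1; funext τ; ring
        have h2 : (∫ τ in (0:ℝ)..t, (t - τ)) = t ^ 2 / 2 := by
          rw [intervalIntegral.integral_comp_sub_left (fun x => x) t]
          simp [integral_id]
        rw [h1, h2]; ring
      have hnn : 0 ≤ m * (β * M) * t ^ 2 / 2 :=
        div_nonneg (mul_nonneg (mul_nonneg hm.le (mul_nonneg hβ0 hM0)) (sq_nonneg t)) two_pos.le
      rw [Real.norm_eq_abs, hval] at hle
      exact hle
    · filter_upwards with τ hτ
      rw [Real.norm_eq_abs]
      exact hE τ hτ.1.le hτ.2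
    · exact ((continuous_const.mul ((continuous_const.sub continuous_id).mul
        continuous_const))).intervalIntegrable 0 t
  -- first term
  have hfirst : |Ev 0 * u₀ x - Ew 0 * u₀ x| ≤ m * (t * (β * M)) * c := by
    have h1 : |Ev 0 - Ew 0| ≤ m * ((t - 0) * (β * M)) := hE 0 le_rfl ht0
    have : Ev 0 * u₀ x - Ew 0 * u₀ x = (Ev 0 - Ew 0) * u₀ x := by ring
    rw [this, abs_mul, abs_of_nonneg (hu₀ x).1]
    calc |Ev 0 - Ew 0| * u₀ x ≤ (m * ((t - 0) * (β * M))) * c :=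
        mul_le_mul h1 (hu₀ x).2 (hu₀ x).1
          (mul_nonneg hm.le (mul_nonneg (by linarith) (mul_nonneg hβ0 hM0)))
      _ = m * (t * (β * M)) * c := by ring
  -- combine
  have key : Ev 0 * u₀ x + lam * (∫ τ in (0:ℝ)..t, Ev τ)
      - (Ew 0 * u₀ x + lam * ∫ τ in (0:ℝ)..t, Ew τ)
      = (Ev 0 * u₀ x - Ew 0 * u₀ x)
        + lam * ((∫ τ in (0:ℝ)..t, Ev τ) - ∫ τ in (0:ℝ)..t, Ew τ) := by ring
  calc |Ev 0 * u₀ x + lam * (∫ τ in (0:ℝ)..t, Ev τ)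
      - (Ew 0 * u₀ x + lam * ∫ τ in (0:ℝ)..t, Ew τ)|
      = |(Ev 0 * u₀ x - Ew 0 * u₀ x)
        + lam * ((∫ τ in (0:ℝ)..t, Ev τ) - ∫ τ in (0:ℝ)..t, Ew τ)| := by rw [key]
    _ ≤ |Ev 0 * u₀ x - Ew 0 * u₀ x|
        + |lam * ((∫ τ in (0:ℝ)..t, Ev τ) - ∫ τ in (0:ℝ)..t, Ew τ)| := abs_add_le _ _
    _ ≤ m * (t * (β * M)) * c + lam * (m * (β * M) * t ^ 2 / 2) := by
        refine add_le_add hfirst ?_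
        rw [abs_mul, abs_of_pos hlam]
        exact mul_le_mul_of_nonneg_left houter hlam.le
    _ ≤ (lam * β * m * T ^ 2 / 2 + c * β * m * T) * M := by
        have ht2 : t ^ 2 ≤ T ^ 2 := pow_le_pow_left₀ ht0 htT 2
        have hβM : 0 ≤ β * M := mul_nonneg hβ0 hM0
        nlinarith [mul_nonneg hβ0 hM0, mul_le_mul_of_nonneg_left htT (mul_nonneg (mul_nonneg hm.le hβM) hc.le), mul_le_mul_of_nonneg_left ht2 (mul_nonneg (mul_nonneg hm.le hβM) hlam.le)]
end

section
/- Let μ ∈ ℝ and let (c_k) be a real sequence with c₀ > μ + 1 satisfying the recurrence c_k − ln c_k + μ = c_{k−1}, with each c_k chosen as the larger solution (so c_k > c_{k−1} and c_k → ∞). Then c_k = k·ln k + k·ln ln k − (μ+1)·k + o(k) as k → ∞. -/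
open Real Filter Asymptotics Finset Topology

section AuxStmt18

variable {μ : ℝ} {c : ℕ → ℝ}

lemma lem_log_half {y : ℝ} (hy : 0 < y) : Real.log y ≤ y / 2 := by
  have hs : Real.sqrt y ^ 2 = y := Real.sq_sqrt hy.le
  have hs0 : 0 < Real.sqrt y := Real.sqrt_pos.2 hy
  have h1 : Real.log (Real.sqrt y) ≤ Real.sqrt y - 1 := Real.log_le_sub_one_of_pos hs0
  have h2 : Real.log y = 2 * Real.log (Real.sqrt y) := by
    rw [Real.log_sqrt hy.le]; ring
  nlinarith [sq_nonneg (Real.sqrt y - 2)]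

lemma lem_sum_log_ub (n : ℕ) : ∑ k ∈ range n, Real.log ((k:ℝ)+1) ≤ n * Real.log n := by
  have h : ∀ k ∈ range n, Real.log ((k:ℝ)+1) ≤ Real.log n := by
    intro k hk
    apply Real.log_le_log (by positivity)
    have := (Finset.mem_range.1 hk)
    exact_mod_cast Nat.succ_le_of_lt this
  calc ∑ k ∈ range n, Real.log ((k:ℝ)+1) ≤ ∑ k ∈ range n, Real.log n := Finset.sum_le_sum h
    _ = n * Real.log n := by rw [Finset.sum_const, card_range, nsmul_eq_mul]

lemma lem_sum_log_lb (n : ℕ) : (n:ℝ) * Real.log n - n ≤ ∑ k ∈ range n, Real.log ((k:ℝ)+1) := by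
  rcases Nat.eq_zero_or_pos n with rfl | hn
  · simp
  have hfac : (0:ℝ) < (n.factorial : ℝ) := by exact_mod_cast n.factorial_pos
  have hsum : ∑ k ∈ range n, Real.log ((k:ℝ)+1) = Real.log (n.factorial : ℝ) := by
    rw [← Real.log_prod (fun x _ => by positivity)]
    congr 1
    rw [← Finset.prod_range_add_one_eq_factorial n]
    push_cast
    ring
  rw [hsum]
  have hkey : ((n:ℝ))^n ≤ (n.factorial : ℝ) * Real.exp n := by
    have h1 : ((n:ℝ))^n / (n.factorial : ℝ) ≤ Real.exp n := by
      have := Real.sum_le_exp_of_nonneg (x := (n:ℝ)) (by positivity) (n+1)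
      refine le_trans ?_ this
      exact Finset.single_le_sum (f := fun i => (n:ℝ)^i / (i.factorial : ℝ))
        (fun i _ => by positivity) (Finset.self_mem_range_succ n)
    rw [div_le_iff₀ hfac] at h1
    linarith [h1]
  have := Real.log_le_log (by positivity) hkey
  rw [Real.log_pow, Real.log_mul hfac.ne' (Real.exp_pos _).ne', Real.log_exp] at this
  linarith

lemma lem_sum_le (v w : ℕ → ℝ) (N : ℕ) (h : ∀ m, N ≤ m → v m ≤ w m) (n : ℕ) :
    ∑ k ∈ range n, v k ≤ ∑ k ∈ range n, w k + ∑ k ∈ range N, |v k - w k| := by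
  have key : ∑ k ∈ range n, (v k - w k) ≤ ∑ k ∈ range N, |v k - w k| := by
    rcases le_total n N with hn | hn
    · refine le_trans (Finset.sum_le_sum fun k _ => le_abs_self _) ?_
      exact Finset.sum_le_sum_of_subset_of_nonneg (Finset.range_subset_range.2 hn)
        (fun _ _ _ => abs_nonneg _)
    · have hsplit : ∑ k ∈ range n, (v k - w k)
          = ∑ k ∈ range N, (v k - w k) + ∑ k ∈ Ico N n, (v k - w k) := by
        rw [Finset.sum_Ico_eq_sub _ hn]; ring
      have h2 : ∑ k ∈ Ico N n, (v k - w k) ≤ 0 :=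
        Finset.sum_nonpos fun k hk => sub_nonpos.2 (h k (Finset.mem_Ico.1 hk).1)
      have h3 : ∑ k ∈ range N, (v k - w k) ≤ ∑ k ∈ range N, |v k - w k| :=
        Finset.sum_le_sum fun k _ => le_abs_self _
      linarith
  rw [Finset.sum_sub_distrib] at key
  linarith

lemma lem_log3 : (1:ℝ) ≤ Real.log 3 := by
  rw [Real.le_log_iff_exp_le (by norm_num)]
  have := Real.exp_one_lt_d9
  linarith

lemma lem_lognat {n : ℕ} (hn : 3 ≤ n) : 1 ≤ Real.log n := by
  refine le_trans lem_log3 (Real.log_le_log (by norm_num) ?_)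
  exact_mod_cast hn

lemma lem_tel (hrec : ∀ k : ℕ, 1 ≤ k → c k - Real.log (c k) + μ = c (k - 1)) :
    ∀ n : ℕ, c n = c 0 + ∑ k ∈ range n, (Real.log (c (k+1)) - μ) := by
  intro n
  induction n with
  | zero => simp
  | succ n ih =>
    have h := hrec (n+1) (by omega)
    simp only [Nat.add_sub_cancel] at h
    rw [Finset.sum_range_succ]
    linarith [ih]

lemma lem_lin (hrec : ∀ k : ℕ, 1 ≤ k → c k - Real.log (c k) + μ = c (k - 1))
    (htop : Filter.Tendsto c Filter.atTop Filter.atTop) :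
    ∃ N : ℕ, 3 ≤ N ∧ ∀ n, N ≤ n → 3 ≤ c n ∧ (n:ℝ)/2 ≤ c n := by
  obtain ⟨N₀, hN₀⟩ := (htop.eventually_ge_atTop (max 3 (Real.exp (1+μ)))).exists_forall_of_atTop
  have hstep : ∀ m : ℕ, (3:ℝ) + m ≤ c (N₀ + m) := by
    intro m
    induction m with
    | zero => simpa using le_trans (le_max_left _ _) (hN₀ N₀ le_rfl)
    | succ m ih =>
      have h := hrec (N₀ + m + 1) (by omega)
      simp only [Nat.add_sub_cancel] at h
      have hc : max 3 (Real.exp (1+μ)) ≤ c (N₀ + m + 1) := hN₀ _ (by omega)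
      have hpos : (0:ℝ) < c (N₀ + m + 1) :=
        lt_of_lt_of_le (by norm_num) (le_trans (le_max_left _ _) hc)
      have hlog : 1 + μ ≤ Real.log (c (N₀ + m + 1)) :=
        (Real.le_log_iff_exp_le hpos).2 (le_trans (le_max_right _ _) hc)
      push_cast
      have h5 : c (N₀ + m) + 1 ≤ c (N₀ + m + 1) := by linarith
      have h6 : c (N₀ + (m+1)) = c (N₀ + m + 1) := rfl
      rw [h6]
      linarith
  refine ⟨2 * N₀ + 3, by omega, fun n hn => ?_⟩
  have hm : N₀ ≤ n := by omega
  have hst := hstep (n - N₀)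
  rw [Nat.add_sub_cancel' hm] at hst
  have hcast : ((n - N₀ : ℕ) : ℝ) = (n:ℝ) - N₀ := by
    push_cast [Nat.cast_sub hm]; ring
  rw [hcast] at hst
  constructor
  · have : (0:ℝ) ≤ (n:ℝ) - N₀ := by
      have : (N₀:ℝ) ≤ n := by exact_mod_cast hm
      linarith
    linarith
  · have h1 : (N₀:ℝ) + 3 ≤ (n:ℝ)/2 + 3 := by
      have h2 : (2 * N₀ + 3 : ℕ) ≤ n := hn
      have h3 : ((2 * N₀ + 3 : ℕ) : ℝ) ≤ n := by exact_mod_cast h2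
      push_cast at h3
      linarith
    linarith

lemma lem_logle (hmono : StrictMono c) {m n : ℕ} (hmn : m ≤ n) (hcn : 1 ≤ c n) :
    Real.log (c m) ≤ |c 0| + Real.log (c n) := by
  have hlogn : 0 ≤ Real.log (c n) := Real.log_nonneg hcn
  rcases le_or_gt (c m) 0 with hm | hm
  · have h0m : c 0 ≤ c m := hmono.monotone (Nat.zero_le m)
    rcases eq_or_lt_of_le hm with he | hlt
    · rw [he, Real.log_zero]; positivity
    · have h4 : Real.log (c m) = Real.log (-c m) := (Real.log_neg_eq_log _).symm
      rw [h4]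
      have h1 : Real.log (-c m) ≤ -c m - 1 := Real.log_le_sub_one_of_pos (by linarith)
      have h2 : -c m ≤ -c 0 := by linarith
      have h3 : -c 0 ≤ |c 0| := neg_le_abs _
      linarith
  · have h5 : Real.log (c m) ≤ Real.log (c n) :=
      Real.log_le_log hm (hmono.monotone hmn)
    have := abs_nonneg (c 0)
    linarith

lemma lem_logub (hrec : ∀ k : ℕ, 1 ≤ k → c k - Real.log (c k) + μ = c (k - 1))
    (hmono : StrictMono c)
    (hlin : ∃ N : ℕ, 3 ≤ N ∧ ∀ n, N ≤ n → 3 ≤ c n ∧ (n:ℝ)/2 ≤ c n) :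
    ∃ B : ℝ, 0 ≤ B ∧ ∀ᶠ n : ℕ in atTop, Real.log (c n) ≤ 2 * Real.log n + B := by
  obtain ⟨N, hN3, hN⟩ := hlin
  set A : ℝ := |c 0| + |μ| + 2 with hA
  have hA1 : 1 ≤ A := by
    have := abs_nonneg (c 0); have := abs_nonneg μ; simp only [hA]; linarith
  refine ⟨2 * Real.log A, by have := Real.log_nonneg hA1; linarith, ?_⟩
  filter_upwards [eventually_ge_atTop N, eventually_ge_atTop ⌈|c 0|⌉₊,
    eventually_ge_atTop 3] with n hnN hnc hn3
  have hc3 : 3 ≤ c n := (hN n hnN).1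
  have hcpos : (0:ℝ) < c n := by linarith
  have hlog1 : 1 ≤ Real.log (c n) := by
    rw [Real.le_log_iff_exp_le hcpos]
    have := Real.exp_one_lt_d9
    linarith
  have hn3' : (3:ℝ) ≤ (n:ℝ) := by exact_mod_cast hn3
  have hnc' : |c 0| ≤ (n:ℝ) := le_trans (Nat.le_ceil _) (by exact_mod_cast hnc)
  have hsum : c n ≤ c 0 + n * (|c 0| + Real.log (c n) + |μ|) := by
    have := lem_tel hrec n
    have hterm : ∀ k ∈ range n, Real.log (c (k+1)) - μ ≤ |c 0| + Real.log (c n) + |μ| := by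
      intro k hk
      have hk' : k + 1 ≤ n := Finset.mem_range.1 hk
      have := lem_logle hmono hk' (by linarith)
      have := neg_abs_le μ
      linarith
    have hsum2 : ∑ k ∈ range n, (Real.log (c (k+1)) - μ)
        ≤ n * (|c 0| + Real.log (c n) + |μ|) := by
      calc ∑ k ∈ range n, (Real.log (c (k+1)) - μ)
          ≤ ∑ _k ∈ range n, (|c 0| + Real.log (c n) + |μ|) := Finset.sum_le_sum hterm
        _ = n * (|c 0| + Real.log (c n) + |μ|) := by
            rw [Finset.sum_const, card_range, nsmul_eq_mul]
    linarith
  have hkey : c n ≤ (n:ℝ) * A * Real.log (c n) := by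
    have e1 : (0:ℝ) ≤ (A - 1) * (Real.log (c n) - 1) :=
      mul_nonneg (by linarith) (by linarith)
    have hc0 : c 0 ≤ |c 0| := le_abs_self _
    nlinarith [hn3']
  have hlogs : Real.log (c n) ≤ Real.log n + Real.log A + Real.log (Real.log (c n)) := by
    have h1 : Real.log (c n) ≤ Real.log ((n:ℝ) * A * Real.log (c n)) :=
      Real.log_le_log hcpos hkey
    rwa [Real.log_mul (by positivity) (by linarith), Real.log_mul (by positivity) (by linarith)]
      at h1
  have hhalf : Real.log (Real.log (c n)) ≤ Real.log (c n) / 2 :=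
    lem_log_half (by linarith)
  linarith

lemma lem_crude
    (htel : ∀ n : ℕ, c n = c 0 + ∑ k ∈ range n, (Real.log (c (k+1)) - μ))
    (hlin : ∃ N : ℕ, 3 ≤ N ∧ ∀ n, N ≤ n → 3 ≤ c n ∧ (n:ℝ)/2 ≤ c n)
    (hlogub : ∃ B : ℝ, 0 ≤ B ∧ ∀ᶠ n : ℕ in atTop, Real.log (c n) ≤ 2 * Real.log n + B) :
    ∃ N₂ : ℕ, 3 ≤ N₂ ∧ ∀ n, N₂ ≤ n →
      (1/4:ℝ) * ((n:ℝ) * Real.log n) ≤ c n ∧ c n ≤ 3 * ((n:ℝ) * Real.log n) := by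
  obtain ⟨N, hN3, hN⟩ := hlin
  obtain ⟨B, hB0, hBev⟩ := hlogub
  obtain ⟨N₁, hN₁⟩ := eventually_atTop.1 hBev
  set v : ℕ → ℝ := fun k => Real.log (c (k+1)) with hv
  set w : ℕ → ℝ := fun k => 2 * Real.log ((k:ℝ)+1) + B with hw
  have hvw : ∀ m, N₁ ≤ m → v m ≤ w m := by
    intro m hm
    have h1 := hN₁ (m+1) (by omega)
    have hc : ((m+1:ℕ):ℝ) = (m:ℝ)+1 := by push_cast; ring
    rw [hc] at h1
    simpa [hv, hw] using h1
  set C₁ : ℝ := ∑ k ∈ range N₁, |v k - w k| with hC₁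
  have hC₁0 : 0 ≤ C₁ := Finset.sum_nonneg fun _ _ => abs_nonneg _
  have hup : ∀ n : ℕ, ∑ k ∈ range n, v k ≤ 2*((n:ℝ)*Real.log n) + B*n + C₁ := by
    intro n
    have h1 := lem_sum_le v w N₁ hvw n
    have h2 : ∑ k ∈ range n, w k
        = 2*(∑ k ∈ range n, Real.log ((k:ℝ)+1)) + B*n := by
      simp only [hw]
      rw [Finset.sum_add_distrib, Finset.sum_const, card_range, ← Finset.mul_sum,
        nsmul_eq_mul]
      ring
    have h3 := lem_sum_log_ub n
    rw [h2] at h1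
    linarith
  set v' : ℕ → ℝ := fun k => Real.log ((k:ℝ)+1) - 1 with hv'
  have hv'w : ∀ m, N ≤ m → v' m ≤ v m := by
    intro m hm
    have h1 := (hN (m+1) (by omega)).2
    have hc : ((m+1:ℕ):ℝ) = (m:ℝ)+1 := by push_cast; ring
    rw [hc] at h1
    have h2 : (0:ℝ) < ((m:ℝ)+1)/2 := by positivity
    have h3 : Real.log (((m:ℝ)+1)/2) ≤ Real.log (c (m+1)) := Real.log_le_log h2 h1
    rw [Real.log_div (by positivity) (by norm_num)] at h3
    have h4 : Real.log 2 ≤ 1 := by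
      have := Real.log_two_lt_d9; linarith
    simp only [hv', hv]
    linarith
  set C₂ : ℝ := ∑ k ∈ range N, |v' k - v k| with hC₂
  have hC₂0 : 0 ≤ C₂ := Finset.sum_nonneg fun _ _ => abs_nonneg _
  have hlo : ∀ n : ℕ, (n:ℝ)*Real.log n - 2*n - C₂ ≤ ∑ k ∈ range n, v k := by
    intro n
    have h1 := lem_sum_le v' v N hv'w n
    have h2 : ∑ k ∈ range n, v' k
        = (∑ k ∈ range n, Real.log ((k:ℝ)+1)) - n := by
      simp only [hv']
      rw [Finset.sum_sub_distrib, Finset.sum_const, card_range, nsmul_eq_mul]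
      ring
    have h3 := lem_sum_log_lb n
    rw [h2] at h1
    linarith
  have hlogtend : Tendsto (fun n : ℕ => Real.log n) atTop atTop :=
    Real.tendsto_log_atTop.comp tendsto_natCast_atTop_atTop
  set K : ℝ := |c 0| + 2*|μ| + B + C₁ + C₂ + 12 with hK
  obtain ⟨N₂', hN₂'⟩ := eventually_atTop.1 (hlogtend.eventually_ge_atTop K)
  refine ⟨max N₂' 3, le_max_right _ _, fun n hn => ?_⟩
  have hn3 : 3 ≤ n := le_trans (le_max_right _ _) hn
  have hn3' : (3:ℝ) ≤ (n:ℝ) := by exact_mod_cast hn3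
  have hlogK : K ≤ Real.log n := hN₂' n (le_trans (le_max_left _ _) hn)
  have htel' : c n = c 0 + (∑ k ∈ range n, v k) - μ * n := by
    have h1 := htel n
    have h2 : ∑ k ∈ range n, (Real.log (c (k+1)) - μ)
        = (∑ k ∈ range n, v k) - μ * n := by
      rw [Finset.sum_sub_distrib, Finset.sum_const, card_range, nsmul_eq_mul]
      ring
    rw [h2] at h1
    linarith
  have habs0 : c 0 ≤ |c 0| := le_abs_self _
  have habs0' : -|c 0| ≤ c 0 := neg_abs_le _
  have habsμ : μ ≤ |μ| := le_abs_self _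
  have habsμ' : -|μ| ≤ μ := neg_abs_le _
  have hnK : (n:ℝ) * K ≤ (n:ℝ) * Real.log n :=
    mul_le_mul_of_nonneg_left hlogK (by positivity)
  have hn0 : (0:ℝ) ≤ (n:ℝ) := Nat.cast_nonneg n
  have hμn1 : -|μ| * (n:ℝ) ≤ μ * n := mul_le_mul_of_nonneg_right (neg_abs_le μ) hn0
  have hμn2 : μ * (n:ℝ) ≤ |μ| * n := mul_le_mul_of_nonneg_right (le_abs_self μ) hn0
  constructor
  · have h1 := hlo n
    have key : 2*(n:ℝ) + C₂ + |μ| * (n:ℝ) + |c 0| ≤ (3/4) * ((n:ℝ)*Real.log n) := by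
      nlinarith [hnK, mul_nonneg (sub_nonneg.2 hn3') hC₂0,
        mul_nonneg (sub_nonneg.2 hn3') (abs_nonneg (c 0)),
        mul_nonneg (sub_nonneg.2 hn3') (abs_nonneg μ),
        mul_nonneg (sub_nonneg.2 hn3') hB0, mul_nonneg (sub_nonneg.2 hn3') hC₁0]
    linarith [hlo n, hμn2]
  · have h1 := hup n
    have key : |c 0| + B*(n:ℝ) + C₁ + |μ| * (n:ℝ) ≤ (n:ℝ)*Real.log n := by
      nlinarith [hnK, mul_nonneg (sub_nonneg.2 hn3') hC₂0,
        mul_nonneg (sub_nonneg.2 hn3') (abs_nonneg (c 0)),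
        mul_nonneg (sub_nonneg.2 hn3') (abs_nonneg μ),
        mul_nonneg (sub_nonneg.2 hn3') hB0, mul_nonneg (sub_nonneg.2 hn3') hC₁0]
    linarith [hup n, hμn1]
lemma lem_LL_ge (k : ℕ) : -1 ≤ Real.log (Real.log ((k:ℝ)+1)) := by
  match k with
  | 0 => norm_num
  | 1 =>
    norm_num
    have h2 : (1/2 : ℝ) ≤ Real.log 2 := by
      have := Real.log_two_gt_d9; linarith
    have h3 : Real.log (1/2) ≤ Real.log (Real.log 2) :=
      Real.log_le_log (by norm_num) h2
    have h4 : Real.log (1/2 : ℝ) = -Real.log 2 := by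
      rw [one_div, Real.log_inv]
    have := Real.log_two_lt_d9
    rw [h4] at h3
    linarith
  | (m+2) =>
    have h1 : (3:ℝ) ≤ (m:ℝ)+2+1 := by
      have : (0:ℝ) ≤ (m:ℝ) := Nat.cast_nonneg m
      push_cast; linarith
    have h2 : (1:ℝ) ≤ Real.log ((m:ℝ)+2+1) :=
      le_trans lem_log3 (Real.log_le_log (by norm_num) h1)
    have h3 : (0:ℝ) ≤ Real.log (Real.log ((m:ℝ)+2+1)) := Real.log_nonneg h2
    have hc : ((m+2:ℕ):ℝ) + 1 = (m:ℝ)+2+1 := by push_cast; ring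
    rw [hc]
    linarith

lemma lem_LL_le {k n : ℕ} (hk : k < n) (hn : 3 ≤ n) :
    Real.log (Real.log ((k:ℝ)+1)) ≤ Real.log (Real.log (n:ℝ)) := by
  have hlogn : 1 ≤ Real.log (n:ℝ) := lem_lognat hn
  have hLLn : 0 ≤ Real.log (Real.log (n:ℝ)) := Real.log_nonneg hlogn
  match k with
  | 0 => norm_num; exact hLLn
  | 1 =>
    norm_num
    have h1 : Real.log 2 < 1 := by have := Real.log_two_lt_d9; linarith
    have h2 : Real.log (Real.log 2) < 0 :=
      Real.log_neg (by have := Real.log_two_gt_d9; linarith) h1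
    linarith
  | (m+2) =>
    have h1 : (3:ℝ) ≤ ((m+2:ℕ):ℝ)+1 := by push_cast; linarith [Nat.cast_nonneg (α := ℝ) m]
    have h2 : (1:ℝ) ≤ Real.log (((m+2:ℕ):ℝ)+1) :=
      le_trans lem_log3 (Real.log_le_log (by norm_num) h1)
    have h3 : ((m+2:ℕ):ℝ)+1 ≤ (n:ℝ) := by
      have : (m+2)+1 ≤ n := hk
      exact_mod_cast this
    exact Real.log_le_log (by linarith) (Real.log_le_log (by linarith) h3)

set_option maxHeartbeats 1000000 in
lemma lem_rho
    (htel : ∀ n : ℕ, c n = c 0 + ∑ k ∈ range n, (Real.log (c (k+1)) - μ))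
    (hsum_ub : ∀ n : ℕ, ∑ k ∈ range n, Real.log ((k:ℝ)+1) ≤ n * Real.log n)
    (hsum_lb : ∀ n : ℕ, (n:ℝ) * Real.log n - n ≤ ∑ k ∈ range n, Real.log ((k:ℝ)+1))
    (hcrude : ∃ N₂ : ℕ, 3 ≤ N₂ ∧ ∀ n, N₂ ≤ n →
      (1/4:ℝ) * ((n:ℝ) * Real.log n) ≤ c n ∧ c n ≤ 3 * ((n:ℝ) * Real.log n)) :
    Tendsto (fun n : ℕ => Real.log (c n) - Real.log n - Real.log (Real.log n))
      atTop (𝓝 0) := by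
  classical
  obtain ⟨N₂, hN₂3, hN₂⟩ := hcrude
  set ρ : ℕ → ℝ := fun m => Real.log (c m) - Real.log m - Real.log (Real.log m) with hρ
  set M : ℝ := Real.log 4 + Real.log 3 with hM
  have hlog4 : (0:ℝ) ≤ Real.log 4 := Real.log_nonneg (by norm_num)
  have hlog3 : (0:ℝ) ≤ Real.log 3 := Real.log_nonneg (by norm_num)
  have hM0 : 0 ≤ M := by rw [hM]; linarith
  have hMb : ∀ m, N₂ ≤ m → |ρ m| ≤ M := by
    intro m hm
    have hm3 : 3 ≤ m := le_trans hN₂3 hm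
    have hm3' : (3:ℝ) ≤ (m:ℝ) := by exact_mod_cast hm3
    have hlogm : 1 ≤ Real.log (m:ℝ) := lem_lognat hm3
    have hX : (0:ℝ) < (m:ℝ) * Real.log m := by nlinarith
    obtain ⟨hlb, hub⟩ := hN₂ m hm
    have hcpos : (0:ℝ) < c m := by nlinarith
    have hup : Real.log (c m) ≤ Real.log 3 + (Real.log m + Real.log (Real.log m)) := by
      have := Real.log_le_log hcpos hub
      rwa [Real.log_mul (by norm_num) hX.ne', Real.log_mul (by positivity) (by linarith)]
        at this
    have hlow : -Real.log 4 + (Real.log m + Real.log (Real.log m)) ≤ Real.log (c m) := by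
      have h1 : (0:ℝ) < (1/4:ℝ) * ((m:ℝ) * Real.log m) := by positivity
      have := Real.log_le_log h1 hlb
      rw [Real.log_mul (by norm_num) hX.ne', Real.log_mul (by positivity) (by linarith)]
        at this
      have h4 : Real.log (1/4 : ℝ) = -Real.log 4 := by rw [one_div, Real.log_inv]
      rw [h4] at this
      linarith
    rw [abs_le]
    constructor
    · simp only [hρ, hM]; linarith
    · simp only [hρ, hM]; linarith
  -- decomposition of c n
  have hdecomp : ∀ n : ℕ, c n = c 0 - μ*n + (∑ k ∈ range n, Real.log ((k:ℝ)+1))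
      + (∑ k ∈ range n, Real.log (Real.log ((k:ℝ)+1))) + (∑ k ∈ range n, ρ (k+1)) := by
    intro n
    have hterm : ∀ k : ℕ, Real.log (c (k+1)) - μ
        = Real.log ((k:ℝ)+1) + Real.log (Real.log ((k:ℝ)+1)) + ρ (k+1) - μ := by
      intro k
      have hc : ((k+1:ℕ):ℝ) = (k:ℝ)+1 := by push_cast; ring
      simp only [hρ, hc]
      ring
    rw [htel n, Finset.sum_congr rfl (fun k _ => hterm k)]
    simp only [Finset.sum_add_distrib, Finset.sum_sub_distrib, Finset.sum_const,
      card_range, nsmul_eq_mul]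
    ring
  -- bounds on sums of ρ
  have hρub' : ∀ m, N₂ ≤ m → ρ (m+1) ≤ M := fun m hm =>
    (abs_le.1 (hMb (m+1) (by omega))).2
  have hρlb' : ∀ m, N₂ ≤ m → -M ≤ ρ (m+1) := fun m hm =>
    (abs_le.1 (hMb (m+1) (by omega))).1
  set Cρ : ℝ := ∑ k ∈ range N₂, |ρ (k+1) - M| with hCρ
  set Cρ' : ℝ := ∑ k ∈ range N₂, |(-M) - ρ (k+1)| with hCρ'
  have hCρ0 : 0 ≤ Cρ := Finset.sum_nonneg fun _ _ => abs_nonneg _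
  have hCρ'0 : 0 ≤ Cρ' := Finset.sum_nonneg fun _ _ => abs_nonneg _
  have hρub : ∀ n : ℕ, ∑ k ∈ range n, ρ (k+1) ≤ M*n + Cρ := by
    intro n
    have := lem_sum_le (fun k => ρ (k+1)) (fun _ => M) N₂ hρub' n
    simp only [Finset.sum_const, card_range, nsmul_eq_mul] at this
    linarith [this]
  have hρlb : ∀ n : ℕ, -(M*n) - Cρ' ≤ ∑ k ∈ range n, ρ (k+1) := by
    intro n
    have := lem_sum_le (fun _ => -M) (fun k => ρ (k+1)) N₂ (fun m hm => hρlb' m hm) n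
    simp only [Finset.sum_const, card_range, nsmul_eq_mul] at this
    linarith [this]
  -- bounds on sums of log log
  have hLLlb : ∀ n : ℕ, -(n:ℝ) ≤ ∑ k ∈ range n, Real.log (Real.log ((k:ℝ)+1)) := by
    intro n
    have h1 : ∀ k ∈ range n, -1 ≤ Real.log (Real.log ((k:ℝ)+1)) := fun k _ => lem_LL_ge k
    have := Finset.sum_le_sum h1
    simp only [Finset.sum_const, card_range, nsmul_eq_mul] at this
    linarith [this]
  have hLLub : ∀ n : ℕ, 3 ≤ n →
      ∑ k ∈ range n, Real.log (Real.log ((k:ℝ)+1)) ≤ n * Real.log (Real.log n) := by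
    intro n hn
    have h1 : ∀ k ∈ range n, Real.log (Real.log ((k:ℝ)+1)) ≤ Real.log (Real.log (n:ℝ)) :=
      fun k hk => lem_LL_le (Finset.mem_range.1 hk) hn
    have := Finset.sum_le_sum h1
    simp only [Finset.sum_const, card_range, nsmul_eq_mul] at this
    linarith [this]
  -- constants
  set D : ℝ := M + |μ| + 2 with hD
  set E : ℝ := |c 0| + Cρ + Cρ' with hE
  have hD0 : 0 ≤ D := by rw [hD]; have := abs_nonneg μ; linarith
  have hE0 : 0 ≤ E := by rw [hE]; have := abs_nonneg (c 0); linarith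
  -- sandwich for c n
  have hsand : ∀ n : ℕ, 3 ≤ n →
      (n:ℝ)*Real.log n - D*n - E ≤ c n ∧
      c n ≤ (n:ℝ)*Real.log n + Real.log (Real.log n) * n + D*n + E := by
    intro n hn
    have h1 := hdecomp n
    have h2 := hsum_ub n
    have h3 := hsum_lb n
    have h4 := hρub n
    have h5 := hρlb n
    have h6 := hLLlb n
    have h7 := hLLub n hn
    have habs0 : c 0 ≤ |c 0| := le_abs_self _
    have habs0' : -|c 0| ≤ c 0 := neg_abs_le _
    have hn0 : (0:ℝ) ≤ (n:ℝ) := Nat.cast_nonneg n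
    have hμn1 : -|μ| * (n:ℝ) ≤ μ * n :=
      mul_le_mul_of_nonneg_right (neg_abs_le μ) hn0
    have hμn2 : μ * (n:ℝ) ≤ |μ| * n :=
      mul_le_mul_of_nonneg_right (le_abs_self μ) hn0
    constructor
    · simp only [hD, hE]; linarith [hμn2]
    · simp only [hD, hE]; linarith [hμn1]
  -- limits
  have hlogtend : Tendsto (fun n : ℕ => Real.log n) atTop atTop :=
    Real.tendsto_log_atTop.comp tendsto_natCast_atTop_atTop
  have t1 : Tendsto (fun n : ℕ => (Real.log n)⁻¹) atTop (𝓝 0) :=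
    hlogtend.inv_tendsto_atTop
  have hXtend : Tendsto (fun n : ℕ => (n:ℝ) * Real.log n) atTop atTop :=
    Filter.Tendsto.atTop_mul_atTop₀ tendsto_natCast_atTop_atTop hlogtend
  have t2 : Tendsto (fun n : ℕ => ((n:ℝ) * Real.log n)⁻¹) atTop (𝓝 0) :=
    hXtend.inv_tendsto_atTop
  have t3 : Tendsto (fun n : ℕ => Real.log (Real.log n) * (Real.log n)⁻¹) atTop (𝓝 0) := by
    have h1 : Tendsto (fun y : ℝ => Real.log y / y) atTop (𝓝 0) :=
      Real.isLittleO_log_id_atTop.tendsto_div_nhds_zero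
    have h2 := h1.comp hlogtend
    simpa [Function.comp_def, div_eq_mul_inv] using h2
  -- the ratio tends to 1
  have T : Tendsto (fun n : ℕ => c n / ((n:ℝ) * Real.log n)) atTop (𝓝 1) := by
    apply tendsto_of_tendsto_of_tendsto_of_le_of_le'
      (g := fun n : ℕ => 1 - D * (Real.log n)⁻¹ - E * ((n:ℝ)*Real.log n)⁻¹)
      (h := fun n : ℕ => 1 + Real.log (Real.log n) * (Real.log n)⁻¹
        + D * (Real.log n)⁻¹ + E * ((n:ℝ)*Real.log n)⁻¹)
    · have : Tendsto (fun n : ℕ => 1 - D * (Real.log n)⁻¹ - E * ((n:ℝ)*Real.log n)⁻¹)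
          atTop (𝓝 (1 - D*0 - E*0)) :=
        (tendsto_const_nhds.sub (t1.const_mul D)).sub (t2.const_mul E)
      simpa using this
    · have : Tendsto (fun n : ℕ => 1 + Real.log (Real.log n) * (Real.log n)⁻¹
          + D * (Real.log n)⁻¹ + E * ((n:ℝ)*Real.log n)⁻¹)
          atTop (𝓝 (1 + 0 + D*0 + E*0)) :=
        ((tendsto_const_nhds.add t3).add (t1.const_mul D)).add (t2.const_mul E)
      simpa using this
    · filter_upwards [eventually_ge_atTop 3] with n hn
      have hn3' : (3:ℝ) ≤ (n:ℝ) := by exact_mod_cast hn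
      have hlogn : 1 ≤ Real.log (n:ℝ) := lem_lognat hn
      have hX : (0:ℝ) < (n:ℝ) * Real.log n := by nlinarith
      rw [le_div_iff₀ hX]
      have hexp : (1 - D * (Real.log n)⁻¹ - E * ((n:ℝ)*Real.log n)⁻¹) * ((n:ℝ)*Real.log n)
          = (n:ℝ)*Real.log n - D*n - E := by
        field_simp
      rw [hexp]
      exact (hsand n hn).1
    · filter_upwards [eventually_ge_atTop 3] with n hn
      have hn3' : (3:ℝ) ≤ (n:ℝ) := by exact_mod_cast hn
      have hlogn : 1 ≤ Real.log (n:ℝ) := lem_lognat hn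
      have hX : (0:ℝ) < (n:ℝ) * Real.log n := by nlinarith
      rw [div_le_iff₀ hX]
      have hexp : (1 + Real.log (Real.log n) * (Real.log n)⁻¹ + D * (Real.log n)⁻¹
            + E * ((n:ℝ)*Real.log n)⁻¹) * ((n:ℝ)*Real.log n)
          = (n:ℝ)*Real.log n + Real.log (Real.log n) * n + D*n + E := by
        field_simp
      rw [hexp]
      exact (hsand n hn).2
  -- conclude
  have hcont : Tendsto (fun x : ℝ => Real.log x) (𝓝 1) (𝓝 0) := by
    have := (Real.continuousAt_log (one_ne_zero)).tendsto
    rwa [Real.log_one] at this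
  have R := hcont.comp T
  refine R.congr' ?_
  filter_upwards [eventually_ge_atTop (max N₂ 3)] with n hn
  have hnN₂ : N₂ ≤ n := le_trans (le_max_left _ _) hn
  have hn3 : 3 ≤ n := le_trans (le_max_right _ _) hn
  have hn3' : (3:ℝ) ≤ (n:ℝ) := by exact_mod_cast hn3
  have hlogn : 1 ≤ Real.log (n:ℝ) := lem_lognat hn3
  have hX : (0:ℝ) < (n:ℝ) * Real.log n := by nlinarith
  have hcpos : (0:ℝ) < c n := by
    have := (hN₂ n hnN₂).1; nlinarith
  show Real.log (c n / ((n:ℝ) * Real.log n)) = _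
  rw [Real.log_div hcpos.ne' hX.ne', Real.log_mul (by positivity) (by linarith)]
  ring
lemma lem_delta (μ : ℝ) :
    Tendsto (fun k : ℕ =>
      ((((k:ℝ)+1) * Real.log ((k:ℝ)+1) + ((k:ℝ)+1) * Real.log (Real.log ((k:ℝ)+1))
        - (μ+1) * ((k:ℝ)+1))
      - ((k:ℝ) * Real.log k + (k:ℝ) * Real.log (Real.log k) - (μ+1) * (k:ℝ)))
      - (Real.log ((k:ℝ)+1) + Real.log (Real.log ((k:ℝ)+1)) - μ)) atTop (𝓝 0) := by
  have hA : Tendsto (fun k : ℕ => (k:ℝ) * (Real.log ((k:ℝ)+1) - Real.log k))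
      atTop (𝓝 1) := by
    have base : Tendsto (fun x : ℝ => x * Real.log (1 + 1/x)) atTop (𝓝 1) := by
      simpa using Real.tendsto_mul_log_one_add_div_atTop 1
    have h0 : Tendsto (fun k : ℕ => (k:ℝ) * Real.log (1 + 1/(k:ℝ))) atTop (𝓝 1) :=
      base.comp tendsto_natCast_atTop_atTop
    refine h0.congr' ?_
    filter_upwards [eventually_ge_atTop 1] with k hk
    have hk0 : (0:ℝ) < (k:ℝ) := by exact_mod_cast hk
    have he : 1 + 1/(k:ℝ) = ((k:ℝ)+1)/(k:ℝ) := by field_simp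
    rw [he, Real.log_div (by linarith) hk0.ne']
  have hB : Tendsto (fun k : ℕ =>
      (k:ℝ) * (Real.log (Real.log ((k:ℝ)+1)) - Real.log (Real.log k)))
      atTop (𝓝 0) := by
    have t1 : Tendsto (fun k : ℕ => (Real.log (k:ℝ))⁻¹) atTop (𝓝 0) :=
      (Real.tendsto_log_atTop.comp tendsto_natCast_atTop_atTop).inv_tendsto_atTop
    apply tendsto_of_tendsto_of_tendsto_of_le_of_le' tendsto_const_nhds t1
    · filter_upwards [eventually_ge_atTop 3] with k hk
      have hk3 : (3:ℝ) ≤ (k:ℝ) := by exact_mod_cast hk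
      have hl1 : 1 ≤ Real.log (k:ℝ) := lem_lognat hk
      have hll : Real.log (k:ℝ) ≤ Real.log ((k:ℝ)+1) :=
        Real.log_le_log (by linarith) (by linarith)
      have : Real.log (Real.log (k:ℝ)) ≤ Real.log (Real.log ((k:ℝ)+1)) :=
        Real.log_le_log (by linarith) hll
      have hk0 : (0:ℝ) ≤ (k:ℝ) := by linarith
      nlinarith
    · filter_upwards [eventually_ge_atTop 3] with k hk
      have hk3 : (3:ℝ) ≤ (k:ℝ) := by exact_mod_cast hk
      have hk0 : (0:ℝ) < (k:ℝ) := by linarith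
      have hl1 : 1 ≤ Real.log (k:ℝ) := lem_lognat hk
      have hll : Real.log (k:ℝ) ≤ Real.log ((k:ℝ)+1) :=
        Real.log_le_log (by linarith) (by linarith)
      have hpos : (0:ℝ) < Real.log ((k:ℝ)+1) / Real.log (k:ℝ) := div_pos (by linarith) (by linarith)
      have h1 : Real.log (Real.log ((k:ℝ)+1)) - Real.log (Real.log (k:ℝ))
          ≤ Real.log ((k:ℝ)+1) / Real.log (k:ℝ) - 1 := by
        rw [← Real.log_div (by linarith) (by linarith)]
        exact Real.log_le_sub_one_of_pos hpos
      have h2 : Real.log ((k:ℝ)+1) - Real.log (k:ℝ) ≤ 1/(k:ℝ) := by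
        have he : 1 + 1/(k:ℝ) = ((k:ℝ)+1)/(k:ℝ) := by field_simp
        have h3 : Real.log (((k:ℝ)+1)/(k:ℝ)) ≤ ((k:ℝ)+1)/(k:ℝ) - 1 :=
          Real.log_le_sub_one_of_pos (by positivity)
        rw [Real.log_div (by linarith) hk0.ne'] at h3
        have h4 : ((k:ℝ)+1)/(k:ℝ) - 1 = 1/(k:ℝ) := by field_simp; ring
        rw [h4] at h3
        exact h3
      have h5 : Real.log ((k:ℝ)+1) / Real.log (k:ℝ) - 1
          = (Real.log ((k:ℝ)+1) - Real.log (k:ℝ)) / Real.log (k:ℝ) := by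
        field_simp
      have h6 : Real.log (Real.log ((k:ℝ)+1)) - Real.log (Real.log (k:ℝ))
          ≤ (1/(k:ℝ)) / Real.log (k:ℝ) := by
        rw [h5] at h1
        refine le_trans h1 ?_
        gcongr
      calc (k:ℝ) * (Real.log (Real.log ((k:ℝ)+1)) - Real.log (Real.log (k:ℝ)))
          ≤ (k:ℝ) * ((1/(k:ℝ)) / Real.log (k:ℝ)) := by gcongr
        _ = (Real.log (k:ℝ))⁻¹ := by field_simp
  have := (hA.add hB).sub (tendsto_const_nhds (x := (1:ℝ)))
  norm_num at this
  refine this.congr ?_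
  intro k
  ring

end AuxStmt18

theorem stmt_18 (μ : ℝ) (c : ℕ → ℝ) (h0 : μ + 1 < c 0)
    (hrec : ∀ k : ℕ, 1 ≤ k → c k - Real.log (c k) + μ = c (k - 1))
    (hmono : StrictMono c)
    (htop : Filter.Tendsto c Filter.atTop Filter.atTop) :
    (fun k : ℕ => c k - ((k : ℝ) * Real.log k + (k : ℝ) * Real.log (Real.log k)
        - (μ + 1) * (k : ℝ))) =o[Filter.atTop] (fun k : ℕ => (k : ℝ)) := by
  have htel := lem_tel hrec
  have hlin := lem_lin hrec htop
  have hlogub := lem_logub hrec hmono hlin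
  have hcrude := lem_crude htel hlin hlogub
  have hrho := lem_rho htel lem_sum_log_ub lem_sum_log_lb hcrude
  set g : ℕ → ℝ :=
    fun m => (m:ℝ) * Real.log m + (m:ℝ) * Real.log (Real.log m) - (μ+1)*(m:ℝ) with hg
  set u : ℕ → ℝ := fun k => (Real.log (c (k+1)) - μ) - (g (k+1) - g k) with hu
  have husum : ∀ n : ℕ, c n - g n = c 0 + ∑ k ∈ range n, u k := by
    intro n
    have h1 := htel n
    have h2 : ∑ k ∈ range n, (g (k+1) - g k) = g n - g 0 := Finset.sum_range_sub g n
    have hg0 : g 0 = 0 := by simp [hg]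
    have h3 : ∑ k ∈ range n, u k
        = (∑ k ∈ range n, (Real.log (c (k+1)) - μ)) - (g n - g 0) := by
      simp only [hu]
      rw [Finset.sum_sub_distrib, h2]
    rw [h3, hg0]
    linarith
  have hρ' : Tendsto (fun k : ℕ => Real.log (c (k+1)) - Real.log ((k+1:ℕ):ℝ)
      - Real.log (Real.log ((k+1:ℕ):ℝ))) atTop (𝓝 0) := by
    exact hrho.comp (tendsto_add_atTop_nat 1)
  have hδ : Tendsto (fun k : ℕ => (g (k+1) - g k)
      - (Real.log ((k+1:ℕ):ℝ) + Real.log (Real.log ((k+1:ℕ):ℝ)) - μ)) atTop (𝓝 0) := by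
    refine (lem_delta μ).congr (fun k => ?_)
    simp only [hg]
    push_cast
    ring
  have hu0 : Tendsto u atTop (𝓝 0) := by
    have h := hρ'.sub hδ
    rw [sub_zero] at h
    refine h.congr (fun k => ?_)
    simp only [hu]
    ring
  have hsum_o : (fun n : ℕ => ∑ k ∈ range n, u k) =o[atTop] (fun n : ℕ => (n:ℝ)) :=
    Asymptotics.isLittleO_sum_range_of_tendsto_zero hu0
  have hconst_o : (fun _ : ℕ => c 0) =o[atTop] (fun n : ℕ => (n:ℝ)) := by
    refine Asymptotics.isLittleO_const_left.2 (Or.inr ?_)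
    have h1 : Tendsto (fun n : ℕ => |(n:ℝ)|) atTop atTop :=
      tendsto_atTop_mono (fun n => le_abs_self _) tendsto_natCast_atTop_atTop
    simpa [Function.comp_def, Real.norm_eq_abs] using h1
  have key := hconst_o.add hsum_o
  have final : (fun n : ℕ => c n - g n) =o[atTop] (fun n : ℕ => (n:ℝ)) := by
    refine key.congr' ?_ EventuallyEq.rfl
    exact Filter.Eventually.of_forall (fun n => (husum n).symm)
  simpa only [hg] using final
end
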